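/- Let A be a reduced commutative ring. If h ∈ A is such that the basic open D(h) of Spec(A) is disjoint from the union U of all basic opens D(f) for which M[f⁻¹] is a finite free A[f⁻¹]-module (where M is a fixed finitely generated A-module), then h = 0. Consequently U is dense in Spec(A). -/

import Mathlib

open LocalizedModule in
private lemma locMk_eq_zero' {A : Type*} [CommRing A] {M : Type*} [AddCommGroup M] [Module A M]
    {S : Submonoid A} {m : M} {s : S} :
    LocalizedModule.mk m s = 0 ↔ ∃ u : S, u • m = 0 := by
  rw [← zero_mk (1 : S), mk_eq]
  simp

private lemma locMk_sum {A : Type*} [CommRing A] {M : Type*} [AddCommGroup M] [Module A M]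
    {S : Submonoid A} {n : ℕ} (a : Fin n → A) (s : Fin n → M) :
    LocalizedModule.mk (∑ i, a i • s i) (1 : S)
      = ∑ i, a i • LocalizedModule.mk (s i) (1 : S) := by
  have := map_sum (LocalizedModule.mkLinearMap S M) (fun i => a i • s i) Finset.univ
  simp only [LocalizedModule.mkLinearMap_apply, map_smul] at this
  simpa using this

private lemma free_aux {A : Type*} [CommRing A] [IsReduced A] {M : Type*} [AddCommGroup M]
    [Module A M] :
    ∀ (n : ℕ) (s : Fin n → M) (g h : A), g * h ≠ 0 →
    (∀ x : M, ∃ (k : ℕ) (a : Fin n → A), g ^ k • x = ∑ i, a i • s i) →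
    ∃ f : A, f * h ≠ 0 ∧
      Module.Finite (Localization.Away f) (LocalizedModule (Submonoid.powers f) M) ∧
      Module.Free (Localization.Away f) (LocalizedModule (Submonoid.powers f) M) := by
  intro n
  induction n with
  | zero =>
    intro s g h hgh hsp
    have hss : Subsingleton (LocalizedModule (Submonoid.powers g) M) := by
      refine subsingleton_of_forall_eq 0 fun z => ?_
      induction z using LocalizedModule.induction_on with
      | h m t =>
        obtain ⟨k, a, hk⟩ := hsp m
        simp only [Finset.univ_eq_empty, Finset.sum_empty] at hk
        exact locMk_eq_zero'.mpr ⟨⟨g ^ k, k, rfl⟩, hk⟩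
    exact ⟨g, hgh, inferInstance, inferInstance⟩
  | succ n ih =>
    intro s g h hgh hsp
    by_cases hstar : ∀ a : Fin (n+1) → A, (∃ m : ℕ, g ^ m • ∑ i, a i • s i = 0) →
      ∀ i, a i * (g * h) = 0
    · -- the images of s form a basis after inverting f = g * h
      set f : A := g * h with hf
      have hfh : f * h ≠ 0 := by
        intro e
        apply hgh
        have : (g * h) * (g * h) = g * (f * h) := by rw [hf]; ring
        rw [e, mul_zero] at this
        exact IsReduced.eq_zero _ ⟨2, by rw [pow_two, this]⟩
      set T := Localization.Away f
      set v : Fin (n+1) → LocalizedModule (Submonoid.powers f) M :=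
        fun i => LocalizedModule.mk (s i) 1 with hv
      have hspan : ∀ z : LocalizedModule (Submonoid.powers f) M,
          z ∈ Submodule.span T (Set.range v) := by
        intro z
        induction z using LocalizedModule.induction_on with
        | h x t =>
          obtain ⟨k, a, hk⟩ := hsp x
          have hfk : f ^ k • x = ∑ i, (h ^ k * a i) • s i := by
            have e : f ^ k • x = h ^ k • (g ^ k • x) := by
              rw [smul_smul]; congr 1; rw [hf]; ring
            rw [e, hk, Finset.smul_sum]
            exact Finset.sum_congr rfl fun i _ => smul_smul _ _ _
          have e1 : LocalizedModule.mk x t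
              = Localization.mk 1 (t * ⟨f ^ k, k, rfl⟩) • LocalizedModule.mk (f ^ k • x)
                  (1 : Submonoid.powers f) := by
            rw [LocalizedModule.mk_smul_mk, one_smul, mul_one]
            exact (LocalizedModule.mk_cancel_common_right t ⟨f ^ k, k, rfl⟩ x).symm
          rw [e1, hfk, locMk_sum]
          refine Submodule.smul_mem _ _ (Submodule.sum_mem _ fun i _ => ?_)
          rw [← algebraMap_smul T (h ^ k * a i) (v i)]
          exact Submodule.smul_mem _ _ (Submodule.subset_span ⟨i, rfl⟩)
      have hli : LinearIndependent T v := by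
        rw [Fintype.linearIndependent_iff]
        intro c hc i
        obtain ⟨b, hb⟩ := IsLocalization.exist_integer_multiples_of_finite
          (Submonoid.powers f) (S := T) c
        choose a' ha' using hb
        have hsum : LocalizedModule.mk (∑ i, a' i • s i) (1 : Submonoid.powers f) = 0 := by
          have e : ∑ i, a' i • v i = 0 := by
            have e' : ∑ i, (algebraMap A T (a' i)) • v i = (b : A) • ∑ i, c i • v i := by
              rw [Finset.smul_sum]
              refine Finset.sum_congr rfl fun i _ => ?_
              rw [ha' i, smul_assoc]
            simp only [algebraMap_smul] at e'
            rw [e', hc, smul_zero]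
          rw [locMk_sum, e]
        obtain ⟨u, hu⟩ := locMk_eq_zero'.mp hsum
        have hu' : (u : A) • ∑ i', a' i' • s i' = 0 := hu
        obtain ⟨m, hmu⟩ := u.2
        rw [← hmu] at hu'
        have hrel : g ^ m • ∑ i', (h ^ m * a' i') • s i' = 0 := by
          calc g ^ m • ∑ i', (h ^ m * a' i') • s i'
              = ∑ i', (g ^ m * (h ^ m * a' i')) • s i' := by
                rw [Finset.smul_sum]
                exact Finset.sum_congr rfl fun i' _ => smul_smul _ _ _
            _ = ∑ i', (f ^ m * a' i') • s i' := by
                refine Finset.sum_congr rfl fun i' _ => ?_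
                congr 1; rw [hf]; ring
            _ = f ^ m • ∑ i', a' i' • s i' := by
                rw [Finset.smul_sum]
                exact Finset.sum_congr rfl fun i' _ => (smul_smul _ _ _).symm
            _ = 0 := hu'
        have hz := hstar (fun i' => h ^ m * a' i') ⟨m, hrel⟩ i
        have hfz : f ^ (m+1) * a' i = 0 := by
          have e : f ^ (m+1) * a' i = g ^ m * ((h ^ m * a' i) * (g * h)) := by rw [hf]; ring
          rw [e, hz, mul_zero]
        have hmap : algebraMap A T (a' i) = 0 :=
          (IsLocalization.map_eq_zero_iff (Submonoid.powers f) T _).mpr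
            ⟨⟨f ^ (m+1), m+1, rfl⟩, hfz⟩
        have e : (algebraMap A T (b : A)) * c i = 0 := by
          rw [← Algebra.smul_def, ← ha' i, hmap]
        exact ((IsUnit.mul_right_eq_zero (IsLocalization.map_units T b)).mp e)
      let B : Module.Basis (Fin (n+1)) T (LocalizedModule (Submonoid.powers f) M) :=
        Module.Basis.mk hli (fun z _ => hspan z)
      exact ⟨f, hfh, Module.Finite.of_basis B, Module.Free.of_basis B⟩
    · -- there is a relation allowing to drop one generator
      push_neg at hstar
      obtain ⟨a, ⟨m, hm⟩, j, hj⟩ := hstar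
      have hm' : ∑ i, (g ^ m * a i) • s i = 0 := by
        rw [← hm, Finset.smul_sum]
        exact Finset.sum_congr rfl fun i _ => (smul_smul _ _ _).symm
      refine ih (fun i => s (j.succAbove i)) (g * a j) h
        (by rw [mul_comm g (a j), mul_assoc]; exact hj) ?_
      intro x
      obtain ⟨k, a', hk⟩ := hsp x
      refine ⟨k + m + 1, fun i => g ^ (m+1) * a j ^ (k+m+1) * a' (j.succAbove i)
          - g ^ (m+1) * a j ^ (k+m) * a' j * a (j.succAbove i), ?_⟩
      have key : (g * a j) ^ (k + m + 1) • x
          = ∑ i, ((g ^ (m+1) * a j ^ (k+m+1) * a' i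
              - g ^ (m+1) * a j ^ (k+m) * a' j * a i)) • s i := by
        have e1 : (g * a j) ^ (k + m + 1) • x = (g ^ (m+1) * a j ^ (k+m+1)) • (g ^ k • x) := by
          rw [smul_smul]; congr 1; ring
        have e2 : ∑ i, (g ^ (m+1) * a j ^ (k+m) * a' j * a i) • s i = 0 := by
          have e3 := congrArg (fun z => (g * a j ^ (k+m) * a' j) • z) hm'
          simp only [smul_zero, Finset.smul_sum, smul_smul] at e3
          rw [← e3]
          exact Finset.sum_congr rfl fun i _ => by congr 1; ring
        rw [e1, hk, Finset.smul_sum]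
        simp only [smul_smul, sub_smul]
        rw [Finset.sum_sub_distrib, e2, sub_zero]
      rw [key, Fin.sum_univ_succAbove
        (fun i => ((g ^ (m+1) * a j ^ (k+m+1) * a' i
          - g ^ (m+1) * a j ^ (k+m) * a' j * a i)) • s i) j]
      have e4 : (g ^ (m+1) * a j ^ (k+m+1) * a' j
          - g ^ (m+1) * a j ^ (k+m) * a' j * a j) = 0 := by ring
      rw [e4, zero_smul, zero_add]

theorem dense_union_of_free_loci (A : Type*) [CommRing A] [IsReduced A]
    (M : Type*) [AddCommGroup M] [Module A M] [Module.Finite A M] :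
    (∀ h : A,
      Disjoint (PrimeSpectrum.basicOpen h : Set (PrimeSpectrum A))
        (⋃ f ∈ {f : A |
            Module.Finite (Localization.Away f) (LocalizedModule (Submonoid.powers f) M) ∧
            Module.Free (Localization.Away f) (LocalizedModule (Submonoid.powers f) M)},
          (PrimeSpectrum.basicOpen f : Set (PrimeSpectrum A))) →
      h = 0) ∧
    Dense (⋃ f ∈ {f : A |
        Module.Finite (Localization.Away f) (LocalizedModule (Submonoid.powers f) M) ∧
        Module.Free (Localization.Away f) (LocalizedModule (Submonoid.powers f) M)},
      (PrimeSpectrum.basicOpen f : Set (PrimeSpectrum A))) := by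
  obtain ⟨n, s, hs⟩ := Module.Finite.exists_fin (R := A) (M := M)
  have key : ∀ h : A, h ≠ 0 → ∃ f : A, f * h ≠ 0 ∧
      Module.Finite (Localization.Away f) (LocalizedModule (Submonoid.powers f) M) ∧
      Module.Free (Localization.Away f) (LocalizedModule (Submonoid.powers f) M) := by
    intro h hh
    refine free_aux n s 1 h (by simpa) ?_
    intro x
    have hx : x ∈ Submodule.span A (Set.range s) := hs ▸ Submodule.mem_top
    obtain ⟨c, hc⟩ := (Finsupp.mem_span_range_iff_exists_finsupp).mp hx
    refine ⟨0, fun i => c i, ?_⟩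
    rw [pow_zero, one_smul, ← hc, Finsupp.sum_fintype]
    intro i; exact zero_smul A (s i)
  set U : Set (PrimeSpectrum A) := (⋃ f ∈ {f : A |
        Module.Finite (Localization.Away f) (LocalizedModule (Submonoid.powers f) M) ∧
        Module.Free (Localization.Away f) (LocalizedModule (Submonoid.powers f) M)},
      (PrimeSpectrum.basicOpen f : Set (PrimeSpectrum A))) with hU
  have key2 : ∀ h : A, h ≠ 0 →
      ((PrimeSpectrum.basicOpen h : Set (PrimeSpectrum A)) ∩ U).Nonempty := by
    intro h hh
    obtain ⟨f, hfh, hfin, hfree⟩ := key h hh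
    have hne : (PrimeSpectrum.basicOpen (f * h) : Set (PrimeSpectrum A)).Nonempty := by
      rw [Set.nonempty_iff_ne_empty]
      intro e
      have : PrimeSpectrum.basicOpen (f * h) = ⊥ := by
        apply TopologicalSpace.Opens.ext
        simpa using e
      exact hfh (IsReduced.eq_zero _ ((PrimeSpectrum.basicOpen_eq_bot_iff _).mp this))
    obtain ⟨p, hp⟩ := hne
    rw [PrimeSpectrum.basicOpen_mul] at hp
    refine ⟨p, hp.2, ?_⟩
    exact Set.mem_biUnion (show f ∈ _ from ⟨hfin, hfree⟩) hp.1
  constructor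
  · intro h hd
    by_contra hh
    obtain ⟨p, hp1, hp2⟩ := key2 h hh
    exact Set.disjoint_left.mp hd hp1 hp2
  · rw [dense_iff_inter_open]
    intro V hV ⟨p, hp⟩
    obtain ⟨_, ⟨h0, rfl⟩, hp', hsub⟩ :=
      PrimeSpectrum.isTopologicalBasis_basic_opens.exists_subset_of_mem_open hp hV
    have hh0 : h0 ≠ 0 := by
      rintro rfl
      simp only [PrimeSpectrum.basicOpen_zero] at hp'
      simpa using hp'
    obtain ⟨q, hq1, hq2⟩ := key2 h0 hh0
    exact ⟨q, hsub hq1, hq2⟩
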